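/- Let n ≥ 1 and m ≥ 1 be natural numbers. Define g : ℕ → ℝ by g(i) = (1/2^n)^{i-1} + n·∑_{ℓ=0}^{i-2} (1/2^n)^ℓ. Then 2(1 - 1/2^n)·∑_{i=1}^{m} g(i) + (g(m)/2^n + n) + m·n(n-1)/2 = m·n(n-1)/2 + 2nm + 2 - 1/2^{nm} + (n·2^n/(2^n - 1))·(1/2^{nm} - 1). -/

import Mathlib

/-- Closed-form evaluation (equations (43)-(44) of the paper) of the total expected age
of one megasection for the optimal deterministic policy `π̌`: with `g i = E[v_{0,i}]`,
`α = 2(1 - 1/2^n)`, `β = n(n-1)/2`, and `E[v_{x₂,x₃}] = g m / 2^n + n`,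
`α ∑_{i=1}^m g i + (g m / 2^n + n) + m n(n-1)/2
  = m n(n-1)/2 + 2nm + 2 - 1/2^{nm} + (n 2^n/(2^n - 1))(1/2^{nm} - 1)`. -/
theorem stmt_9 (n m : ℕ) (hn : 1 ≤ n) (hm : 1 ≤ m) (g : ℕ → ℝ)
    (hg : ∀ i, g i = (1 / 2 ^ n : ℝ) ^ (i - 1)
        + n * ∑ ℓ ∈ Finset.range (i - 1), (1 / 2 ^ n : ℝ) ^ ℓ) :
    2 * (1 - 1 / 2 ^ n) * ∑ i ∈ Finset.Icc 1 m, g i + (g m / 2 ^ n + n)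
        + (m : ℝ) * ((n : ℝ) * ((n : ℝ) - 1)) / 2
      = (m : ℝ) * ((n : ℝ) * ((n : ℝ) - 1)) / 2 + 2 * n * m + 2 - 1 / 2 ^ (n * m)
        + ((n : ℝ) * 2 ^ n / (2 ^ n - 1)) * (1 / 2 ^ (n * m) - 1) := by
  obtain ⟨k, rfl⟩ : ∃ k, m = k + 1 := ⟨m - 1, (Nat.succ_pred_eq_of_pos hm).symm⟩
  have h2 : (2:ℝ) ^ n ≠ 0 := by positivity
  have h2big : (2:ℝ) ≤ 2 ^ n := by
    calc (2:ℝ) = 2 ^ 1 := by norm_num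
    _ ≤ 2 ^ n := by exact pow_le_pow_right₀ (by norm_num) hn
  rw [show (2:ℝ) ^ (n * (k + 1)) = ((2:ℝ) ^ n) ^ (k + 1) from pow_mul 2 n (k+1)]
  generalize hA : (2:ℝ) ^ n = A at hg h2 h2big ⊢
  have hq1 : (1 / A : ℝ) ≠ 1 := by
    have : (1 / A : ℝ) < 1 := by
      rw [div_lt_one (by linarith)]; linarith
    exact ne_of_lt this
  have hAm1 : A - 1 ≠ 0 := by intro h; nlinarith
  have hgeom : ∀ j : ℕ, ∑ ℓ ∈ Finset.range j, (1 / A : ℝ) ^ ℓ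
      = A * (1 - (1 / A : ℝ) ^ j) / (A - 1) := by
    intro j
    rw [geom_sum_eq hq1]
    rw [div_eq_div_iff (sub_ne_zero.mpr hq1) hAm1]
    field_simp
    ring
  have hpow : (1:ℝ) / A ^ (k + 1) = (1 / A : ℝ) ^ (k + 1) := by
    rw [div_pow, one_pow]
  have hsum : ∑ i ∈ Finset.Icc 1 (k + 1), g i
      = A * (1 - (1 / A : ℝ) ^ (k + 1)) / (A - 1)
        + (n : ℝ) * (A * (((k : ℝ) + 1)
            - A * (1 - (1 / A : ℝ) ^ (k + 1)) / (A - 1)) / (A - 1)) := by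
    rw [← Finset.Ico_add_one_right_eq_Icc, Finset.sum_Ico_eq_sum_range]
    have ht : ∀ i, g (1 + i) = (1 / A : ℝ) ^ i
        + (n : ℝ) * (A * (1 - (1 / A : ℝ) ^ i) / (A - 1)) := by
      intro i
      rw [hg (1 + i), Nat.add_sub_cancel_left, hgeom]
    simp only [Nat.succ_sub_one, Nat.add_sub_cancel, ht]
    rw [Finset.sum_add_distrib, hgeom, ← Finset.mul_sum, ← Finset.sum_div,
      ← Finset.mul_sum, Finset.sum_sub_distrib, hgeom]
    rw [Finset.sum_const, Finset.card_range]
    simp only [nsmul_eq_mul, mul_one]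
    push_cast
    field_simp
  rw [hsum, hg (k + 1), Nat.add_sub_cancel, hgeom, hpow]
  generalize hQ : ((1:ℝ) / A) ^ (k + 1) = Q
  have hQk : ((1:ℝ) / A) ^ k = Q * A := by
    rw [← hQ, pow_succ]; field_simp
  rw [hQk]
  field_simp
  push_cast
  ring
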